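/- Let f₁,…,fₙ : R^d → R be convex and L-smooth, let f = (1/n)∑ᵢ fᵢ, and let x* minimize f. Then (1/n)∑ᵢ ‖∇fᵢ(x)‖² ≤ 4L(f(x) − f(x*)) + (2/n)∑ᵢ ‖∇fᵢ(x*)‖² for all x. -/
import Mathlib

open scoped RealInnerProductSpace

lemma key_bound {E : Type*} [NormedAddCommGroup E] [InnerProductSpace ℝ E]
    (L : ℝ) (hL : 0 < L) (g : E → ℝ) (Gg : E → E)
    (hc : ∀ x y, g x ≥ g y + ⟪Gg y, x - y⟫)
    (hs : ∀ x y, g x ≤ g y + ⟪Gg y, x - y⟫ + L / 2 * ‖x - y‖ ^ 2)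
    (x y : E) :
    ‖Gg x - Gg y‖ ^ 2 ≤ 2 * L * (g x - g y - ⟪Gg y, x - y⟫) := by
  set v := Gg x - Gg y with hv
  set z := x - L⁻¹ • v with hz
  have h1 := hc z y
  have h2 := hs z x
  have hzx : z - x = -(L⁻¹ • v) := by simp [hz]
  have hzy : z - y = (x - y) - L⁻¹ • v := by simp [hz]; abel
  have e1 : ⟪Gg x, z - x⟫ = -(L⁻¹ * ⟪Gg x, v⟫) := by
    rw [hzx, inner_neg_right, real_inner_smul_right]
  have e2 : ‖z - x‖ ^ 2 = L⁻¹ ^ 2 * ‖v‖ ^ 2 := by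
    rw [hzx, norm_neg, norm_smul]
    simp [mul_pow, abs_of_pos (inv_pos.mpr hL)]
  have e3 : ⟪Gg y, z - y⟫ = ⟪Gg y, x - y⟫ - L⁻¹ * ⟪Gg y, v⟫ := by
    rw [hzy, inner_sub_right, real_inner_smul_right]
  have hvv : ⟪Gg x, v⟫ - ⟪Gg y, v⟫ = ‖v‖ ^ 2 := by
    rw [← inner_sub_left, ← hv, real_inner_self_eq_norm_sq]
  have hcomb : g y + ⟪Gg y, x - y⟫ - L⁻¹ * ⟪Gg y, v⟫
      ≤ g x - L⁻¹ * ⟪Gg x, v⟫ + L / 2 * (L⁻¹ ^ 2 * ‖v‖ ^ 2) := by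
    calc g y + ⟪Gg y, x - y⟫ - L⁻¹ * ⟪Gg y, v⟫
        = g y + ⟪Gg y, z - y⟫ := by rw [e3]; ring
      _ ≤ g z := h1
      _ ≤ g x + ⟪Gg x, z - x⟫ + L / 2 * ‖z - x‖ ^ 2 := h2
      _ = g x - L⁻¹ * ⟪Gg x, v⟫ + L / 2 * (L⁻¹ ^ 2 * ‖v‖ ^ 2) := by
          rw [e1, e2]; ring
  have hL' : L ≠ 0 := ne_of_gt hL
  have : L⁻¹ * (⟪Gg x, v⟫ - ⟪Gg y, v⟫) - L / 2 * (L⁻¹ ^ 2 * ‖v‖ ^ 2)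
      ≤ g x - g y - ⟪Gg y, x - y⟫ := by linarith
  rw [hvv] at this
  have h4 : (2 * L)⁻¹ * ‖v‖ ^ 2 ≤ g x - g y - ⟪Gg y, x - y⟫ := by
    have : L⁻¹ * ‖v‖ ^ 2 - L / 2 * (L⁻¹ ^ 2 * ‖v‖ ^ 2) = (2 * L)⁻¹ * ‖v‖ ^ 2 := by
      field_simp; ring
    linarith [this]
  calc ‖v‖ ^ 2 = 2 * L * ((2 * L)⁻¹ * ‖v‖ ^ 2) := by field_simp
    _ ≤ 2 * L * (g x - g y - ⟪Gg y, x - y⟫) := by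
        apply mul_le_mul_of_nonneg_left h4; positivity

/-- If `f₁,…,fₙ` are convex and `L`-smooth, `f = (1/n)∑ᵢ fᵢ`, and `x*` minimizes `f`
(so `∑ᵢ ∇fᵢ(x*) = 0`), then
`(1/n)∑ᵢ‖∇fᵢ(x)‖² ≤ 4L(f(x) − f(x*)) + (2/n)∑ᵢ‖∇fᵢ(x*)‖²` for all `x`. -/
theorem stmt2 {d n : ℕ} (hn : 0 < n) (L : ℝ) (hL : 0 < L)
    (f : Fin n → EuclideanSpace ℝ (Fin d) → ℝ)
    (G : Fin n → EuclideanSpace ℝ (Fin d) → EuclideanSpace ℝ (Fin d))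
    (hconv : ∀ i, ∀ x y : EuclideanSpace ℝ (Fin d),
      f i x ≥ f i y + ⟪G i y, x - y⟫)
    (hsmooth : ∀ i, ∀ x y : EuclideanSpace ℝ (Fin d),
      f i x ≤ f i y + ⟪G i y, x - y⟫ + L / 2 * ‖x - y‖ ^ 2)
    (xstar : EuclideanSpace ℝ (Fin d))
    (hmin : ∀ y, (n : ℝ)⁻¹ * ∑ i, f i xstar ≤ (n : ℝ)⁻¹ * ∑ i, f i y)
    (hgradsum : ∑ i, G i xstar = 0)
    (x : EuclideanSpace ℝ (Fin d)) :
    (n : ℝ)⁻¹ * ∑ i, ‖G i x‖ ^ 2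
      ≤ 4 * L * ((n : ℝ)⁻¹ * ∑ i, f i x - (n : ℝ)⁻¹ * ∑ i, f i xstar)
        + 2 / n * ∑ i, ‖G i xstar‖ ^ 2 := by
  have hkey : ∀ i, ‖G i x - G i xstar‖ ^ 2
      ≤ 2 * L * (f i x - f i xstar - ⟪G i xstar, x - xstar⟫) :=
    fun i => key_bound L hL (f i) (G i) (hconv i) (hsmooth i) x xstar
  have hsq : ∀ i, ‖G i x‖ ^ 2 ≤ 2 * ‖G i x - G i xstar‖ ^ 2 + 2 * ‖G i xstar‖ ^ 2 := by
    intro i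
    have h1 : ‖G i x‖ ≤ ‖G i x - G i xstar‖ + ‖G i xstar‖ := by
      calc ‖G i x‖ = ‖(G i x - G i xstar) + G i xstar‖ := by rw [sub_add_cancel]
        _ ≤ _ := norm_add_le _ _
    nlinarith [norm_nonneg (G i x), norm_nonneg (G i x - G i xstar),
      norm_nonneg (G i xstar), sq_nonneg (‖G i x - G i xstar‖ - ‖G i xstar‖)]
  have hinner : ∑ i, ⟪G i xstar, x - xstar⟫ = 0 := by
    rw [← sum_inner, hgradsum, inner_zero_left]
  have hsum : ∑ i, ‖G i x‖ ^ 2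
      ≤ 4 * L * (∑ i, f i x - ∑ i, f i xstar) + 2 * ∑ i, ‖G i xstar‖ ^ 2 := by
    calc ∑ i, ‖G i x‖ ^ 2
        ≤ ∑ i, (2 * ‖G i x - G i xstar‖ ^ 2 + 2 * ‖G i xstar‖ ^ 2) :=
          Finset.sum_le_sum fun i _ => hsq i
      _ ≤ ∑ i, (2 * (2 * L * (f i x - f i xstar - ⟪G i xstar, x - xstar⟫))
            + 2 * ‖G i xstar‖ ^ 2) := by
          apply Finset.sum_le_sum
          intro i _
          have := hkey i
          nlinarith
      _ = 4 * L * (∑ i, f i x - ∑ i, f i xstar)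
            - 4 * L * ∑ i, ⟪G i xstar, x - xstar⟫ + 2 * ∑ i, ‖G i xstar‖ ^ 2 := by
          simp [Finset.sum_add_distrib, ← Finset.mul_sum, Finset.sum_sub_distrib]
          ring
      _ = _ := by rw [hinner]; ring
  have hn' : (0:ℝ) < n := by exact_mod_cast hn
  have := mul_le_mul_of_nonneg_left hsum (le_of_lt (inv_pos.mpr hn'))
  calc (n : ℝ)⁻¹ * ∑ i, ‖G i x‖ ^ 2
      ≤ (n:ℝ)⁻¹ * (4 * L * (∑ i, f i x - ∑ i, f i xstar) + 2 * ∑ i, ‖G i xstar‖ ^ 2) := this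
    _ = 4 * L * ((n : ℝ)⁻¹ * ∑ i, f i x - (n : ℝ)⁻¹ * ∑ i, f i xstar)
        + 2 / n * ∑ i, ‖G i xstar‖ ^ 2 := by ring
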